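/- Let A be g-symmetric, p a polynomial, and R₀(X) = d/dt|_{t=0} p(A + tX). Under the identification u ∧ v ↦ u ⊗ g(v) − v ⊗ g(u) of Λ²V with so(g), R₀ satisfies the Bianchi identity: R₀(u∧v)w + R₀(v∧w)u + R₀(w∧u)v = 0 for all u, v, w ∈ V. -/

import Mathlib

/-- The bivector `u ∧ v`, identified with the endomorphism `x ↦ u·g(v,x) − v·g(u,x)`. -/
noncomputable def wedge {V : Type*} [AddCommGroup V] [Module ℝ V]
    (g : LinearMap.BilinForm ℝ V) (u v : V) : Module.End ℝ V :=
  (g v).smulRight u - (g u).smulRight v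

/-- `R₀(X) = d/dt|₀ p(A + tX)`, given by the explicit formula
`p(t) = tᵏ ↦ Σ_{j<k} A^(k-1-j) X A^j`, extended linearly in `p`. -/
noncomputable def R0 {V : Type*} [AddCommGroup V] [Module ℝ V]
    (p : Polynomial ℝ) (A X : Module.End ℝ V) : Module.End ℝ V :=
  p.sum fun k c => c • ∑ j ∈ Finset.range k, A ^ (k - 1 - j) * X * A ^ j

/-- For a `g`-symmetric `A`, `R₀` satisfies the Bianchi identity. -/
theorem stmt_9 {V : Type*} [AddCommGroup V] [Module ℝ V] [FiniteDimensional ℝ V]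
    (g : LinearMap.BilinForm ℝ V) (hgnd : g.Nondegenerate) (hgsymm : g.IsSymm)
    (A : Module.End ℝ V) (hA : ∀ u v : V, g (A u) v = g u (A v))
    (p : Polynomial ℝ) :
    ∀ u v w : V,
      R0 p A (wedge g u v) w + R0 p A (wedge g v w) u + R0 p A (wedge g w u) v = 0 := by
  intro u v w
  have hpow : ∀ (j : ℕ) (x y : V), g ((A ^ j) x) y = g x ((A ^ j) y) := by
    intro j
    induction j with
    | zero => simp
    | succ n ih =>
      intro x y
      have hc : A ((A ^ n) y) = (A ^ n) (A y) := by
        rw [← Module.End.mul_apply, ← pow_succ', pow_succ, Module.End.mul_apply]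
      rw [pow_succ]
      simp only [Module.End.mul_apply]
      rw [ih, hA, hc]
  have hsym : ∀ (j : ℕ) (x y : V), g x ((A ^ j) y) = g y ((A ^ j) x) := by
    intro j x y
    rw [← hpow]
    exact hgsymm.eq _ _
  have cyc : ∀ k : ℕ,
      ((∑ j ∈ Finset.range k, (A ^ (k - 1 - j) * wedge g u v * A ^ j) w) +
      (∑ j ∈ Finset.range k, (A ^ (k - 1 - j) * wedge g v w * A ^ j) u) +
      (∑ j ∈ Finset.range k, (A ^ (k - 1 - j) * wedge g w u * A ^ j) v)) = 0 := by
    intro k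
    rw [← Finset.sum_add_distrib, ← Finset.sum_add_distrib]
    apply Finset.sum_eq_zero
    intro j _
    simp only [Module.End.mul_apply, wedge, LinearMap.sub_apply, LinearMap.smulRight_apply,
      map_sub, map_smul]
    rw [hsym j v w, hsym j u w, hsym j u v]
    abel
  simp only [R0, Polynomial.sum, LinearMap.sum_apply, LinearMap.smul_apply]
  rw [← Finset.sum_add_distrib, ← Finset.sum_add_distrib]
  apply Finset.sum_eq_zero
  intro k _
  rw [← smul_add, ← smul_add, cyc k, smul_zero]
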